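/- For ρdf graphs G and H with H ground (H contains no blank nodes): G ⊨ H if and only if H ⊆ Cl(G). -/

import Mathlib

/-!
Formalization of ρdf and ρdf⊥¬ (triple languages, semantics, deductive systems),
following Muñoz et al. and "Extending RDFS with negative statements".
-/

namespace Rho

/-- URI references: the ρdf⊥¬ vocabulary elements, atomic resources `res false n`
together with their negations `res true n` (negation flips the Boolean, so ¬¬r = r),
and universal-quantification resources `star b n` = ★_{res b n}. -/
inductive URI : Type where
  | sp | sc | typ | dom | rng | botc | botp
  | res (b : Bool) (n : ℕ)
  | star (b : Bool) (n : ℕ)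
deriving DecidableEq

/-- Terms: URIs, blank nodes and literals (pairwise disjoint alphabets). -/
inductive Term : Type where
  | uri (u : URI)
  | blank (n : ℕ)
  | lit (n : ℕ)
deriving DecidableEq

/-- The ρdf vocabulary {sp, sc, type, dom, range}. -/
def rhoVoc : Set URI := {URI.sp, URI.sc, URI.typ, URI.dom, URI.rng}

/-- The ρdf⊥¬ vocabulary: ρdf plus ⊥c and ⊥p. -/
def botVoc : Set URI := rhoVoc ∪ {URI.botc, URI.botp}

def URI.isStar : URI → Prop
  | URI.star _ _ => True
  | _ => False

def Term.isStar : Term → Prop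
  | Term.uri (URI.star _ _) => True
  | _ => False

def Term.isBlank : Term → Prop
  | Term.blank _ => True
  | _ => False

def Term.isLit : Term → Prop
  | Term.lit _ => True
  | _ => False

def Term.isVoc : Term → Prop
  | Term.uri u => u ∈ rhoVoc
  | _ => False

def Term.isBotVoc : Term → Prop
  | Term.uri u => u ∈ botVoc
  | _ => False

/-- Negation of terms: flips the sign of an atomic/negated resource
(identity on all other terms, where negation is not defined). -/
def negT : Term → Term
  | Term.uri (URI.res b n) => Term.uri (URI.res (!b) n)
  | t => t

/-- An RDF triple ⟨s, p, o⟩ ∈ UBL × U × UBL. -/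
structure Triple : Type where
  s : Term
  p : URI
  o : Term
deriving DecidableEq

/-- ρdf triple: subject and object are not in the ρdf vocabulary. -/
def Triple.okRdf (τ : Triple) : Prop := ¬ τ.s.isVoc ∧ ¬ τ.o.isVoc

/-- ρdf⊥¬ triple: s, o not in the ρdf⊥¬ vocabulary, p not of the form ★_c,
s and o not both of the form ★_c, and if p is in the ρdf⊥¬ vocabulary then
neither s nor o is of the form ★_c. -/
def Triple.okN (τ : Triple) : Prop :=
  ¬ τ.s.isBotVoc ∧ ¬ τ.o.isBotVoc ∧ ¬ τ.p.isStar ∧ ¬ (τ.s.isStar ∧ τ.o.isStar) ∧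
    (τ.p ∈ botVoc → ¬ τ.s.isStar ∧ ¬ τ.o.isStar)

/-- A graph is a finite set of triples. -/
abbrev Graph := Finset Triple

/-- A ρdf graph. -/
def IsRdfGraph (G : Graph) : Prop := ∀ τ ∈ G, τ.okRdf

/-- A ρdf⊥¬ graph. -/
def IsNGraph (G : Graph) : Prop := ∀ τ ∈ G, τ.okN

/-- A ground graph contains no blank nodes. -/
def Ground (G : Graph) : Prop := ∀ τ ∈ G, ¬ τ.s.isBlank ∧ ¬ τ.o.isBlank

/-- No term of the form ★_c occurs in the graph. -/
def StarFree (G : Graph) : Prop := ∀ τ ∈ G, ¬ τ.s.isStar ∧ ¬ τ.o.isStar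

/-- The universe of a graph: the set of terms occurring in its triples. -/
def uni (G : Graph) : Set Term := {t | ∃ τ ∈ G, t = τ.s ∨ t = Term.uri τ.p ∨ t = τ.o}

def rhoVocT : Set Term := Term.uri '' rhoVoc
def botVocT : Set Term := Term.uri '' botVoc

/-- A map: a function on terms preserving URIs and literals. -/
def IsMap (μ : Term → Term) : Prop :=
  (∀ u, μ (Term.uri u) = Term.uri u) ∧ ∀ n, μ (Term.lit n) = Term.lit n

def mapT (μ : Term → Term) (τ : Triple) : Triple := ⟨μ τ.s, τ.p, μ τ.o⟩

def mapG (μ : Term → Term) (G : Graph) : Graph := G.image (mapT μ)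

/-! ### ρdf semantics -/

/-- A ρdf interpretation (raw data, with carrier the type of terms; the
interpretation of literals is the identity, as in the paper). -/
structure Interp : Type where
  ΔR : Set Term
  ΔP : Set Term
  ΔC : Set Term
  ΔL : Set Term
  extP : Term → Set (Term × Term)
  extC : Term → Set Term
  int : Term → Term

def Interp.iv (I : Interp) (e : URI) : Term := I.int (Term.uri e)

/-- `I` is a ρdf interpretation over the vocabulary `V`. -/
structure IsInterp (I : Interp) (V : Set Term) : Prop where
  finR : I.ΔR.Finite
  neR : I.ΔR.Nonempty
  finP : I.ΔP.Finite
  neP : I.ΔP.Nonempty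
  finC : I.ΔC.Finite
  neC : I.ΔC.Nonempty
  finL : I.ΔL.Finite
  neL : I.ΔL.Nonempty
  hCR : I.ΔC ⊆ I.ΔR
  hLR : I.ΔL ⊆ I.ΔR
  hlit : ∀ n, Term.lit n ∈ V → Term.lit n ∈ I.ΔL
  hextP : ∀ p ∈ I.ΔP, I.extP p ⊆ I.ΔR ×ˢ I.ΔR
  hextC : ∀ c ∈ I.ΔC, I.extC c ⊆ I.ΔR
  hint : ∀ t ∈ V, ¬ t.isBlank → I.int t ∈ I.ΔR ∪ I.ΔP
  hintlit : ∀ n, I.int (Term.lit n) = Term.lit n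
  hintblank : ∀ n, I.int (Term.blank n) ∈ I.ΔR

/-- `I` is a model of the graph `G` (reflexive-relaxed ρdf semantics). -/
structure Models (I : Interp) (G : Graph) : Prop where
  interp : IsInterp I (rhoVocT ∪ uni G)
  simple : ∀ τ ∈ G, I.iv τ.p ∈ I.ΔP ∧ (I.int τ.s, I.int τ.o) ∈ I.extP (I.iv τ.p)
  sp_trans : ∀ p q r, p ∈ I.ΔP → q ∈ I.ΔP → r ∈ I.ΔP →
    (p, q) ∈ I.extP (I.iv URI.sp) → (q, r) ∈ I.extP (I.iv URI.sp) →
    (p, r) ∈ I.extP (I.iv URI.sp)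
  sp_sub : ∀ p q, (p, q) ∈ I.extP (I.iv URI.sp) →
    p ∈ I.ΔP ∧ q ∈ I.ΔP ∧ I.extP p ⊆ I.extP q
  sc_trans : ∀ c d e, c ∈ I.ΔC → d ∈ I.ΔC → e ∈ I.ΔC →
    (c, d) ∈ I.extP (I.iv URI.sc) → (d, e) ∈ I.extP (I.iv URI.sc) →
    (c, e) ∈ I.extP (I.iv URI.sc)
  sc_sub : ∀ c d, (c, d) ∈ I.extP (I.iv URI.sc) →
    c ∈ I.ΔC ∧ d ∈ I.ΔC ∧ I.extC c ⊆ I.extC d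
  typI1 : ∀ x c, c ∈ I.ΔC → (x ∈ I.extC c ↔ (x, c) ∈ I.extP (I.iv URI.typ))
  typI2 : ∀ p c x y, (p, c) ∈ I.extP (I.iv URI.dom) → (x, y) ∈ I.extP p → x ∈ I.extC c
  typI3 : ∀ p c x y, (p, c) ∈ I.extP (I.iv URI.rng) → (x, y) ∈ I.extP p → y ∈ I.extC c
  typII1 : ∀ e ∈ rhoVoc, I.iv e ∈ I.ΔP
  typII2 : ∀ p c, (p, c) ∈ I.extP (I.iv URI.dom) → p ∈ I.ΔP ∧ c ∈ I.ΔC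
  typII3 : ∀ p c, (p, c) ∈ I.extP (I.iv URI.rng) → p ∈ I.ΔP ∧ c ∈ I.ΔC
  typII4 : ∀ x c, (x, c) ∈ I.extP (I.iv URI.typ) → c ∈ I.ΔC

/-- ρdf entailment. -/
def Entails (G H : Graph) : Prop := ∀ I : Interp, Models I G → Models I H

/-! ### The ρdf deductive system -/

/-- Instantiations of the ρdf deductive rules (2)-(5): premises / conclusion. -/
inductive RuleInst : Finset Triple → Triple → Prop where
  | sp_trans (a b c : Term) :
      RuleInst {⟨a, URI.sp, b⟩, ⟨b, URI.sp, c⟩} ⟨a, URI.sp, c⟩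
  | sp_mono (d e : URI) (x y : Term) :
      RuleInst {⟨Term.uri d, URI.sp, Term.uri e⟩, ⟨x, d, y⟩} ⟨x, e, y⟩
  | sc_trans (a b c : Term) :
      RuleInst {⟨a, URI.sc, b⟩, ⟨b, URI.sc, c⟩} ⟨a, URI.sc, c⟩
  | sc_mono (a b x : Term) :
      RuleInst {⟨a, URI.sc, b⟩, ⟨x, URI.typ, a⟩} ⟨x, URI.typ, b⟩
  | dom (d : URI) (b x y : Term) :
      RuleInst {⟨Term.uri d, URI.dom, b⟩, ⟨x, d, y⟩} ⟨x, URI.typ, b⟩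
  | rng (d : URI) (b x y : Term) :
      RuleInst {⟨Term.uri d, URI.rng, b⟩, ⟨x, d, y⟩} ⟨y, URI.typ, b⟩
  | idom (a b x y : Term) (d : URI) :
      RuleInst {⟨a, URI.dom, b⟩, ⟨Term.uri d, URI.sp, a⟩, ⟨x, d, y⟩} ⟨x, URI.typ, b⟩
  | irng (a b x y : Term) (d : URI) :
      RuleInst {⟨a, URI.rng, b⟩, ⟨Term.uri d, URI.sp, a⟩, ⟨x, d, y⟩} ⟨y, URI.typ, b⟩

/-- The ρdf rules without the implicit typing rules (5a), (5b). -/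
inductive RuleInstCore : Finset Triple → Triple → Prop where
  | sp_trans (a b c : Term) :
      RuleInstCore {⟨a, URI.sp, b⟩, ⟨b, URI.sp, c⟩} ⟨a, URI.sp, c⟩
  | sp_mono (d e : URI) (x y : Term) :
      RuleInstCore {⟨Term.uri d, URI.sp, Term.uri e⟩, ⟨x, d, y⟩} ⟨x, e, y⟩
  | sc_trans (a b c : Term) :
      RuleInstCore {⟨a, URI.sc, b⟩, ⟨b, URI.sc, c⟩} ⟨a, URI.sc, c⟩
  | sc_mono (a b x : Term) :
      RuleInstCore {⟨a, URI.sc, b⟩, ⟨x, URI.typ, a⟩} ⟨x, URI.typ, b⟩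
  | dom (d : URI) (b x y : Term) :
      RuleInstCore {⟨Term.uri d, URI.dom, b⟩, ⟨x, d, y⟩} ⟨x, URI.typ, b⟩
  | rng (d : URI) (b x y : Term) :
      RuleInstCore {⟨Term.uri d, URI.rng, b⟩, ⟨x, d, y⟩} ⟨y, URI.typ, b⟩

/-- The additional deductive rules of ρdf⊥¬. -/
inductive ExtraRule : Finset Triple → Triple → Prop where
  -- (2c)
  | sp_neg (a b : Bool) (m n : ℕ) :
      ExtraRule {⟨Term.uri (URI.res a m), URI.sp, Term.uri (URI.res b n)⟩}
        ⟨Term.uri (URI.res (!b) n), URI.sp, Term.uri (URI.res (!a) m)⟩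
  -- (2d)
  | sp_star_o (x : Term) (d e : URI) (cb : Bool) (cn : ℕ) :
      ExtraRule {⟨x, d, Term.uri (URI.star cb cn)⟩, ⟨Term.uri d, URI.sp, Term.uri e⟩}
        ⟨x, e, Term.uri (URI.star cb cn)⟩
  -- (2e)
  | sp_star_s (x : Term) (d e : URI) (cb : Bool) (cn : ℕ) :
      ExtraRule {⟨Term.uri (URI.star cb cn), d, x⟩, ⟨Term.uri d, URI.sp, Term.uri e⟩}
        ⟨Term.uri (URI.star cb cn), e, x⟩
  -- (3c)
  | sc_neg (a b : Bool) (m n : ℕ) :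
      ExtraRule {⟨Term.uri (URI.res a m), URI.sc, Term.uri (URI.res b n)⟩}
        ⟨Term.uri (URI.res (!b) n), URI.sc, Term.uri (URI.res (!a) m)⟩
  -- (3d)
  | sc_star_o (a : Term) (d : URI) (bb cb : Bool) (bn cn : ℕ) :
      ExtraRule {⟨a, d, Term.uri (URI.star cb cn)⟩,
                 ⟨Term.uri (URI.res bb bn), URI.sc, Term.uri (URI.res cb cn)⟩}
        ⟨a, d, Term.uri (URI.star bb bn)⟩
  -- (3e)
  | sc_star_s (a : Term) (d : URI) (bb cb : Bool) (bn cn : ℕ) :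
      ExtraRule {⟨Term.uri (URI.star cb cn), d, a⟩,
                 ⟨Term.uri (URI.res bb bn), URI.sc, Term.uri (URI.res cb cn)⟩}
        ⟨Term.uri (URI.star bb bn), d, a⟩
  -- (4c)
  | dom_neg (db bb : Bool) (dn bn : ℕ) (x z y : Term) :
      ExtraRule {⟨Term.uri (URI.res db dn), URI.dom, Term.uri (URI.res bb bn)⟩,
                 ⟨x, URI.typ, Term.uri (URI.res (!bb) bn)⟩,
                 ⟨z, URI.res db dn, y⟩}
        ⟨x, URI.res (!db) dn, y⟩
  -- (4d)
  | rng_neg (db bb : Bool) (dn bn : ℕ) (x z y : Term) :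
      ExtraRule {⟨Term.uri (URI.res db dn), URI.rng, Term.uri (URI.res bb bn)⟩,
                 ⟨y, URI.typ, Term.uri (URI.res (!bb) bn)⟩,
                 ⟨x, URI.res db dn, z⟩}
        ⟨x, URI.res (!db) dn, y⟩
  -- (4e)
  | star_inst_o (a y : Term) (d : URI) (cb : Bool) (cn : ℕ) :
      ExtraRule {⟨a, d, Term.uri (URI.star cb cn)⟩, ⟨y, URI.typ, Term.uri (URI.res cb cn)⟩}
        ⟨a, d, y⟩
  -- (4f)
  | star_inst_s (b x : Term) (d : URI) (cb : Bool) (cn : ℕ) :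
      ExtraRule {⟨Term.uri (URI.star cb cn), d, b⟩, ⟨x, URI.typ, Term.uri (URI.res cb cn)⟩}
        ⟨x, d, b⟩
  -- (4g)
  | star_conflict_o (a y : Term) (db cb : Bool) (dn cn : ℕ) :
      ExtraRule {⟨a, URI.res db dn, Term.uri (URI.star cb cn)⟩, ⟨a, URI.res (!db) dn, y⟩}
        ⟨y, URI.typ, Term.uri (URI.res (!cb) cn)⟩
  -- (4h)
  | star_conflict_s (b x : Term) (db cb : Bool) (dn cn : ℕ) :
      ExtraRule {⟨Term.uri (URI.star cb cn), URI.res db dn, b⟩, ⟨x, URI.res (!db) dn, b⟩}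
        ⟨x, URI.typ, Term.uri (URI.res (!cb) cn)⟩
  -- (6a)
  | botc_symm (a b : Term) : ExtraRule {⟨a, URI.botc, b⟩} ⟨b, URI.botc, a⟩
  -- (6b)
  | botc_subtrans (a b c : Term) :
      ExtraRule {⟨a, URI.botc, b⟩, ⟨c, URI.sc, a⟩} ⟨c, URI.botc, b⟩
  -- (6c)
  | botc_exh (a b : Term) : ExtraRule {⟨a, URI.botc, a⟩} ⟨a, URI.botc, b⟩
  -- (6d)
  | botc_sc (a : Term) (b : Bool) (n : ℕ) :
      ExtraRule {⟨a, URI.botc, Term.uri (URI.res b n)⟩} ⟨a, URI.sc, Term.uri (URI.res (!b) n)⟩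
  -- (6e)
  | sc_botc (a : Term) (b : Bool) (n : ℕ) :
      ExtraRule {⟨a, URI.sc, Term.uri (URI.res b n)⟩} ⟨a, URI.botc, Term.uri (URI.res (!b) n)⟩
  -- (7a)
  | botp_symm (a b : Term) : ExtraRule {⟨a, URI.botp, b⟩} ⟨b, URI.botp, a⟩
  -- (7b)
  | botp_subtrans (a b c : Term) :
      ExtraRule {⟨a, URI.botp, b⟩, ⟨c, URI.sp, a⟩} ⟨c, URI.botp, b⟩
  -- (7c)
  | botp_exh (a b : Term) : ExtraRule {⟨a, URI.botp, a⟩} ⟨a, URI.botp, b⟩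
  -- (7d)
  | botp_sp (a : Term) (b : Bool) (n : ℕ) :
      ExtraRule {⟨a, URI.botp, Term.uri (URI.res b n)⟩} ⟨a, URI.sp, Term.uri (URI.res (!b) n)⟩
  -- (7e)
  | sp_botp (a : Term) (b : Bool) (n : ℕ) :
      ExtraRule {⟨a, URI.sp, Term.uri (URI.res b n)⟩} ⟨a, URI.botp, Term.uri (URI.res (!b) n)⟩
  -- (8a)
  | cross_dom (a b c d : Term) :
      ExtraRule {⟨a, URI.dom, c⟩, ⟨b, URI.dom, d⟩, ⟨c, URI.botc, d⟩} ⟨a, URI.botp, b⟩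
  -- (8b)
  | cross_rng (a b c d : Term) :
      ExtraRule {⟨a, URI.rng, c⟩, ⟨b, URI.rng, d⟩, ⟨c, URI.botc, d⟩} ⟨a, URI.botp, b⟩

/-- All ρdf⊥¬ deductive rules: the ρdf rules plus the additional rules. -/
def RuleInstN (R : Finset Triple) (τ : Triple) : Prop := RuleInst R τ ∨ ExtraRule R τ

/-- The ρdf⊥¬ rules without the implicit typing rules (5a), (5b). -/
def RuleInstNCore (R : Finset Triple) (τ : Triple) : Prop := RuleInstCore R τ ∨ ExtraRule R τ

/-- One derivation step (including the map rule (1a)). -/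
inductive Step (rules : Finset Triple → Triple → Prop) (ok : Triple → Prop) :
    Graph → Graph → Prop where
  | map {G G' : Graph} (μ : Term → Term) (hμ : IsMap μ) (h : mapG μ G' ⊆ G) :
      Step rules ok G G'
  | sub {G G' : Graph} (h : G' ⊆ G) : Step rules ok G G'
  | rule {G : Graph} (R : Finset Triple) (τ : Triple)
      (hR : R ⊆ G) (hr : rules R τ) (hok : ok τ) : Step rules ok G (insert τ G)

/-- One derivation step without the map rule (1a). -/
inductive StepNM (rules : Finset Triple → Triple → Prop) (ok : Triple → Prop) :
    Graph → Graph → Prop where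
  | sub {G G' : Graph} (h : G' ⊆ G) : StepNM rules ok G G'
  | rule {G : Graph} (R : Finset Triple) (τ : Triple)
      (hR : R ⊆ G) (hr : rules R τ) (hok : ok τ) : StepNM rules ok G (insert τ G)

/-- Derivability (a proof is a finite sequence of graphs related by steps). -/
def Deriv (rules : Finset Triple → Triple → Prop) (ok : Triple → Prop) :
    Graph → Graph → Prop := Relation.ReflTransGen (Step rules ok)

/-- Derivability without the map rule (1a). -/
def DerivNM (rules : Finset Triple → Triple → Prop) (ok : Triple → Prop) :
    Graph → Graph → Prop := Relation.ReflTransGen (StepNM rules ok)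

/-- The closure: all triples derivable without rule (1a). -/
def Closure (rules : Finset Triple → Triple → Prop) (ok : Triple → Prop) (G : Graph) :
    Set Triple := {τ | ∃ H : Graph, DerivNM rules ok G H ∧ τ ∈ H}

/-- ρdf derivability `G ⊢ H`. -/
def DerivRdf : Graph → Graph → Prop := Deriv RuleInst Triple.okRdf

/-- ρdf closure `Cl(G)`. -/
def Cl : Graph → Set Triple := Closure RuleInst Triple.okRdf

/-- ρdf closure computed without the implicit typing rules (5). -/
def ClCore : Graph → Set Triple := Closure RuleInstCore Triple.okRdf

/-- ρdf⊥¬ derivability `G ⊢⊥¬ H`. -/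
def DerivN : Graph → Graph → Prop := Deriv RuleInstN Triple.okN

/-- ρdf⊥¬ closure `Cl⊥¬(G)`. -/
def ClN : Graph → Set Triple := Closure RuleInstN Triple.okN

/-- ρdf⊥¬ closure computed without the implicit typing rules (5). -/
def ClNCore : Graph → Set Triple := Closure RuleInstNCore Triple.okN

/-- `S` is closed under the given rules. -/
def ClosedUnder (rules : Finset Triple → Triple → Prop) (ok : Triple → Prop)
    (S : Set Triple) : Prop :=
  ∀ R τ, rules R τ → ok τ → ↑R ⊆ S → τ ∈ S

/-! ### ρdf⊥¬ semantics -/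

/-- A ρdf⊥¬ interpretation (raw data). -/
structure InterpN : Type where
  ΔR : Set Term
  ΔP : Set Term
  ΔC : Set Term
  ΔL : Set Term
  compl : Term → Term
  extPp : Term → Set (Term × Term)
  extPn : Term → Set (Term × Term)
  extCp : Term → Set Term
  extCn : Term → Set Term
  int : Term → Term

def InterpN.iv (I : InterpN) (e : URI) : Term := I.int (Term.uri e)

/-- `I` is a ρdf⊥¬ interpretation over the vocabulary `V`. -/
structure IsInterpN (I : InterpN) (V : Set Term) : Prop where
  finR : I.ΔR.Finite
  neR : I.ΔR.Nonempty
  finP : I.ΔP.Finite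
  neP : I.ΔP.Nonempty
  finC : I.ΔC.Finite
  neC : I.ΔC.Nonempty
  finL : I.ΔL.Finite
  neL : I.ΔL.Nonempty
  hCR : I.ΔC ⊆ I.ΔR
  hLR : I.ΔL ⊆ I.ΔR
  complR : ∀ t ∈ I.ΔR, I.compl t ∈ I.ΔR
  complP : ∀ t ∈ I.ΔP, I.compl t ∈ I.ΔP
  complC : ∀ t ∈ I.ΔC, I.compl t ∈ I.ΔC
  complInvol : ∀ t ∈ I.ΔR ∪ I.ΔP ∪ I.ΔC, I.compl (I.compl t) = t
  hlit : ∀ n, Term.lit n ∈ V → Term.lit n ∈ I.ΔL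
  hPneg : ∀ p ∈ I.ΔP, I.extPp (I.compl p) = I.extPn p
  hCneg : ∀ c ∈ I.ΔC, I.extCp (I.compl c) = I.extCn c
  hextPp : ∀ p ∈ I.ΔP, I.extPp p ⊆ I.ΔR ×ˢ I.ΔR
  hextPn : ∀ p ∈ I.ΔP, I.extPn p ⊆ I.ΔR ×ˢ I.ΔR
  hextCp : ∀ c ∈ I.ΔC, I.extCp c ⊆ I.ΔR
  hextCn : ∀ c ∈ I.ΔC, I.extCn c ⊆ I.ΔR
  hint : ∀ t ∈ V, ¬ t.isBlank → ¬ t.isStar → I.int t ∈ I.ΔR ∪ I.ΔP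
  hintneg : ∀ (b : Bool) (n : ℕ),
    I.int (Term.uri (URI.res (!b) n)) = I.compl (I.int (Term.uri (URI.res b n)))
  hintlit : ∀ n, I.int (Term.lit n) = Term.lit n
  hintblank : ∀ n, I.int (Term.blank n) ∈ I.ΔR

/-- `I` is a ρdf⊥¬-model of the graph `G`. -/
structure ModelsN (I : InterpN) (G : Graph) : Prop where
  interp : IsInterpN I (botVocT ∪ uni G)
  -- Simple
  simple1 : ∀ τ ∈ G, ¬ τ.s.isStar → ¬ τ.o.isStar →
    I.iv τ.p ∈ I.ΔP ∧ (I.int τ.s, I.int τ.o) ∈ I.extPp (I.iv τ.p)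
  simple2 : ∀ τ ∈ G, ∀ (b : Bool) (n : ℕ), τ.o = Term.uri (URI.star b n) →
    I.iv τ.p ∈ I.ΔP ∧ I.int (Term.uri (URI.res b n)) ∈ I.ΔC ∧
    ∀ y ∈ I.extCp (I.int (Term.uri (URI.res b n))), (I.int τ.s, y) ∈ I.extPp (I.iv τ.p)
  simple3 : ∀ τ ∈ G, ∀ (b : Bool) (n : ℕ), τ.s = Term.uri (URI.star b n) →
    I.iv τ.p ∈ I.ΔP ∧ I.int (Term.uri (URI.res b n)) ∈ I.ΔC ∧
    ∀ x ∈ I.extCp (I.int (Term.uri (URI.res b n))), (x, I.int τ.o) ∈ I.extPp (I.iv τ.p)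
  simple4 : ∀ τ ∈ G, ∀ (b : Bool) (n : ℕ), τ.o = Term.uri (URI.star b n) →
    I.iv τ.p ∈ I.ΔP ∧ I.int (Term.uri (URI.res b n)) ∈ I.ΔC ∧
    ∀ y, (I.int τ.s, y) ∈ I.extPn (I.iv τ.p) → y ∈ I.extCn (I.int (Term.uri (URI.res b n)))
  simple5 : ∀ τ ∈ G, ∀ (b : Bool) (n : ℕ), τ.s = Term.uri (URI.star b n) →
    I.iv τ.p ∈ I.ΔP ∧ I.int (Term.uri (URI.res b n)) ∈ I.ΔC ∧
    ∀ x, (x, I.int τ.o) ∈ I.extPn (I.iv τ.p) → x ∈ I.extCn (I.int (Term.uri (URI.res b n)))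
  -- Subproperty
  sp_trans : ∀ p q r, p ∈ I.ΔP → q ∈ I.ΔP → r ∈ I.ΔP →
    (p, q) ∈ I.extPp (I.iv URI.sp) → (q, r) ∈ I.extPp (I.iv URI.sp) →
    (p, r) ∈ I.extPp (I.iv URI.sp)
  sp_sub : ∀ p q, (p, q) ∈ I.extPp (I.iv URI.sp) →
    p ∈ I.ΔP ∧ q ∈ I.ΔP ∧ I.extPp p ⊆ I.extPp q
  sp_contra : ∀ p q, p ∈ I.ΔP → q ∈ I.ΔP →
    ((p, q) ∈ I.extPp (I.iv URI.sp) ↔ (I.compl q, I.compl p) ∈ I.extPp (I.iv URI.sp))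
  -- Subclass
  sc_trans : ∀ c d e, c ∈ I.ΔC → d ∈ I.ΔC → e ∈ I.ΔC →
    (c, d) ∈ I.extPp (I.iv URI.sc) → (d, e) ∈ I.extPp (I.iv URI.sc) →
    (c, e) ∈ I.extPp (I.iv URI.sc)
  sc_sub : ∀ c d, (c, d) ∈ I.extPp (I.iv URI.sc) →
    c ∈ I.ΔC ∧ d ∈ I.ΔC ∧ I.extCp c ⊆ I.extCp d
  sc_contra : ∀ c d, c ∈ I.ΔC → d ∈ I.ΔC →
    ((c, d) ∈ I.extPp (I.iv URI.sc) ↔ (I.compl d, I.compl c) ∈ I.extPp (I.iv URI.sc))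
  -- Typing I
  typI1 : ∀ x c, c ∈ I.ΔC → (x ∈ I.extCp c ↔ (x, c) ∈ I.extPp (I.iv URI.typ))
  typI2 : ∀ p c x y, (p, c) ∈ I.extPp (I.iv URI.dom) → (x, y) ∈ I.extPp p → x ∈ I.extCp c
  typI3 : ∀ p c x y, (p, c) ∈ I.extPp (I.iv URI.rng) → (x, y) ∈ I.extPp p → y ∈ I.extCp c
  typI4 : ∀ p c x y, (p, c) ∈ I.extPp (I.iv URI.dom) → x ∈ I.extCn c →
    (∃ x', (x', y) ∈ I.extPp p) → (x, y) ∈ I.extPn p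
  typI5 : ∀ p c x y, (p, c) ∈ I.extPp (I.iv URI.rng) → y ∈ I.extCn c →
    (∃ y', (x, y') ∈ I.extPp p) → (x, y) ∈ I.extPn p
  -- Typing II
  typII1 : ∀ e ∈ botVoc, I.iv e ∈ I.ΔP
  typII2 : ∀ p c, (p, c) ∈ I.extPp (I.iv URI.dom) → p ∈ I.ΔP ∧ c ∈ I.ΔC
  typII3 : ∀ p c, (p, c) ∈ I.extPp (I.iv URI.rng) → p ∈ I.ΔP ∧ c ∈ I.ΔC
  typII4 : ∀ x c, (x, c) ∈ I.extPp (I.iv URI.typ) → c ∈ I.ΔC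
  -- Disjointness I
  disjI1 : ∀ c d, (c, d) ∈ I.extPp (I.iv URI.botc) → c ∈ I.ΔC ∧ d ∈ I.ΔC
  disjI2 : ∀ p q, (p, q) ∈ I.extPp (I.iv URI.botp) → p ∈ I.ΔP ∧ q ∈ I.ΔP
  disjI3_symm : ∀ c d, (c, d) ∈ I.extPp (I.iv URI.botc) → (d, c) ∈ I.extPp (I.iv URI.botc)
  disjI3_subtrans : ∀ c d e, (c, d) ∈ I.extPp (I.iv URI.botc) →
    (e, c) ∈ I.extPp (I.iv URI.sc) → (e, d) ∈ I.extPp (I.iv URI.botc)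
  disjI3_exh : ∀ c d, (c, c) ∈ I.extPp (I.iv URI.botc) → d ∈ I.ΔC →
    (c, d) ∈ I.extPp (I.iv URI.botc)
  disjI4_symm : ∀ p q, (p, q) ∈ I.extPp (I.iv URI.botp) → (q, p) ∈ I.extPp (I.iv URI.botp)
  disjI4_subtrans : ∀ p q r, (p, q) ∈ I.extPp (I.iv URI.botp) →
    (r, p) ∈ I.extPp (I.iv URI.sp) → (r, q) ∈ I.extPp (I.iv URI.botp)
  disjI4_exh : ∀ p q, (p, p) ∈ I.extPp (I.iv URI.botp) → q ∈ I.ΔP →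
    (p, q) ∈ I.extPp (I.iv URI.botp)
  -- Disjointness II
  disjII1 : ∀ p q c d, (p, c) ∈ I.extPp (I.iv URI.dom) → (q, d) ∈ I.extPp (I.iv URI.dom) →
    (c, d) ∈ I.extPp (I.iv URI.botc) → (p, q) ∈ I.extPp (I.iv URI.botp)
  disjII2 : ∀ p q c d, (p, c) ∈ I.extPp (I.iv URI.rng) → (q, d) ∈ I.extPp (I.iv URI.rng) →
    (c, d) ∈ I.extPp (I.iv URI.botc) → (p, q) ∈ I.extPp (I.iv URI.botp)
  disjII3 : ∀ c d, c ∈ I.ΔC → d ∈ I.ΔC →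
    ((c, d) ∈ I.extPp (I.iv URI.botc) ↔ (c, I.compl d) ∈ I.extPp (I.iv URI.sc))
  disjII4 : ∀ p q, p ∈ I.ΔP → q ∈ I.ΔP →
    ((p, q) ∈ I.extPp (I.iv URI.botp) ↔ (p, I.compl q) ∈ I.extPp (I.iv URI.sp))

/-- ρdf⊥¬ entailment `G ⊨⊥¬ H`. -/
def EntailsN (G H : Graph) : Prop := ∀ I : InterpN, ModelsN I G → ModelsN I H

/-! ### The canonical model of a ρdf⊥¬ graph -/

def canDR (G : Graph) : Set Term := uni G ∪ negT '' uni G ∪ rhoVocT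

def canDP' (G : Graph) : Set Term :=
  {p | p ∈ uni G ∧ ∃ τ ∈ ClN G,
      Term.uri τ.p = p ∨
      ((τ.p = URI.sp ∨ τ.p = URI.botp) ∧ (τ.s = p ∨ τ.o = p)) ∨
      ((τ.p = URI.dom ∨ τ.p = URI.rng) ∧ τ.s = p)}
    ∪ botVocT

def canDP (G : Graph) : Set Term := canDP' G ∪ negT '' canDP' G

def canDC' (G : Graph) : Set Term :=
  {c | c ∈ uni G ∧ ∃ τ ∈ ClN G,
      (τ.p = URI.typ ∧ τ.o = c) ∨
      ((τ.p = URI.sc ∨ τ.p = URI.botc) ∧ (τ.s = c ∨ τ.o = c)) ∨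
      ((τ.p = URI.dom ∨ τ.p = URI.rng) ∧ τ.o = c) ∨
      (∃ (b : Bool) (n : ℕ),
        (τ.s = Term.uri (URI.star b n) ∨ τ.o = Term.uri (URI.star b n)) ∧
        c = Term.uri (URI.res b n))}

def canDC (G : Graph) : Set Term := canDC' G ∪ negT '' canDC' G

def canDL (G : Graph) : Set Term := {t | t ∈ uni G ∧ t.isLit}

def canExtP (G : Graph) (p : Term) : Set (Term × Term) :=
  {x | ∃ u : URI, p = Term.uri u ∧ (⟨x.1, u, x.2⟩ : Triple) ∈ ClN G}

def canExtC (G : Graph) (c : Term) : Set Term :=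
  {x | x ∈ uni G ∧ (⟨x, URI.typ, c⟩ : Triple) ∈ ClN G}

/-- The canonical interpretation `I_G` of a ρdf⊥¬ graph `G`. -/
def canInterp (G : Graph) : InterpN where
  ΔR := canDR G
  ΔP := canDP G
  ΔC := canDC G
  ΔL := canDL G
  compl := negT
  extPp := canExtP G
  extPn := fun p => canExtP G (negT p)
  extCp := canExtC G
  extCn := fun c => canExtC G (negT c)
  int := id

end Rho
namespace Rho

/-! ### Auxiliary lemmas for Statement 5 -/

lemma mem_uni_s {τ : Triple} {G : Graph} (h : τ ∈ G) : τ.s ∈ uni G := ⟨τ, h, Or.inl rfl⟩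
lemma mem_uni_p {τ : Triple} {G : Graph} (h : τ ∈ G) : Term.uri τ.p ∈ uni G :=
  ⟨τ, h, Or.inr (Or.inl rfl)⟩
lemma mem_uni_o {τ : Triple} {G : Graph} (h : τ ∈ G) : τ.o ∈ uni G := ⟨τ, h, Or.inr (Or.inr rfl)⟩

lemma uni_mono {G K : Graph} (h : G ⊆ K) : uni G ⊆ uni K := by
  rintro t ⟨τ, hτ, ht⟩; exact ⟨τ, h hτ, ht⟩

lemma isInterp_anti {I : Interp} {V V' : Set Term} (h : V' ⊆ V) (hI : IsInterp I V) :
    IsInterp I V' :=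
  { hI with hlit := fun n hn => hI.hlit n (h hn), hint := fun t ht => hI.hint t (h ht) }

lemma models_anti {I : Interp} {G K : Graph} (h : K ⊆ G) (M : Models I G) : Models I K :=
  { M with
    interp := isInterp_anti (Set.union_subset_union_right _ (uni_mono h)) M.interp
    simple := fun τ hτ => M.simple τ (h hτ) }

lemma ruleInst_terms {R : Finset Triple} {τ : Triple} (h : RuleInst R τ) :
    τ.s ∈ rhoVocT ∪ uni R ∧ Term.uri τ.p ∈ rhoVocT ∪ uni R ∧ τ.o ∈ rhoVocT ∪ uni R := by
  have voc : ∀ u ∈ rhoVoc, ∀ (S : Finset Triple), Term.uri u ∈ rhoVocT ∪ uni S :=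
    fun u hu _ => Or.inl ⟨u, hu, rfl⟩
  cases h with
  | sp_trans a b c =>
    exact ⟨Or.inr ⟨⟨a, URI.sp, b⟩, by simp, Or.inl rfl⟩, voc _ (by simp [rhoVoc]) _,
      Or.inr ⟨⟨b, URI.sp, c⟩, by simp, Or.inr (Or.inr rfl)⟩⟩
  | sp_mono d e x y =>
    exact ⟨Or.inr ⟨⟨x, d, y⟩, by simp, Or.inl rfl⟩,
      Or.inr ⟨⟨Term.uri d, URI.sp, Term.uri e⟩, by simp, Or.inr (Or.inr rfl)⟩,
      Or.inr ⟨⟨x, d, y⟩, by simp, Or.inr (Or.inr rfl)⟩⟩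
  | sc_trans a b c =>
    exact ⟨Or.inr ⟨⟨a, URI.sc, b⟩, by simp, Or.inl rfl⟩, voc _ (by simp [rhoVoc]) _,
      Or.inr ⟨⟨b, URI.sc, c⟩, by simp, Or.inr (Or.inr rfl)⟩⟩
  | sc_mono a b x =>
    exact ⟨Or.inr ⟨⟨x, URI.typ, a⟩, by simp, Or.inl rfl⟩, voc _ (by simp [rhoVoc]) _,
      Or.inr ⟨⟨a, URI.sc, b⟩, by simp, Or.inr (Or.inr rfl)⟩⟩
  | dom d b x y =>
    exact ⟨Or.inr ⟨⟨x, d, y⟩, by simp, Or.inl rfl⟩, voc _ (by simp [rhoVoc]) _,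
      Or.inr ⟨⟨Term.uri d, URI.dom, b⟩, by simp, Or.inr (Or.inr rfl)⟩⟩
  | rng d b x y =>
    exact ⟨Or.inr ⟨⟨x, d, y⟩, by simp, Or.inr (Or.inr rfl)⟩, voc _ (by simp [rhoVoc]) _,
      Or.inr ⟨⟨Term.uri d, URI.rng, b⟩, by simp, Or.inr (Or.inr rfl)⟩⟩
  | idom a b x y d =>
    exact ⟨Or.inr ⟨⟨x, d, y⟩, by simp, Or.inl rfl⟩, voc _ (by simp [rhoVoc]) _,
      Or.inr ⟨⟨a, URI.dom, b⟩, by simp, Or.inr (Or.inr rfl)⟩⟩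
  | irng a b x y d =>
    exact ⟨Or.inr ⟨⟨x, d, y⟩, by simp, Or.inr (Or.inr rfl)⟩, voc _ (by simp [rhoVoc]) _,
      Or.inr ⟨⟨a, URI.rng, b⟩, by simp, Or.inr (Or.inr rfl)⟩⟩

lemma models_rule {I : Interp} {G : Graph} {R : Finset Triple} {τ : Triple}
    (M : Models I G) (hR : R ⊆ G) (hr : RuleInst R τ) :
    I.iv τ.p ∈ I.ΔP ∧ (I.int τ.s, I.int τ.o) ∈ I.extP (I.iv τ.p) := by
  have S : ∀ σ ∈ R, I.iv σ.p ∈ I.ΔP ∧ (I.int σ.s, I.int σ.o) ∈ I.extP (I.iv σ.p) :=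
    fun σ hσ => M.simple σ (hR hσ)
  have htyp : I.iv URI.typ ∈ I.ΔP := M.typII1 URI.typ (by simp [rhoVoc])
  cases hr with
  | sp_trans a b c =>
    have h1 := S ⟨a, URI.sp, b⟩ (by simp)
    have h2 := S ⟨b, URI.sp, c⟩ (by simp)
    obtain ⟨hpa, hpb, -⟩ := M.sp_sub _ _ h1.2
    obtain ⟨-, hpc, -⟩ := M.sp_sub _ _ h2.2
    exact ⟨h1.1, M.sp_trans _ _ _ hpa hpb hpc h1.2 h2.2⟩
  | sp_mono d e x y =>
    have h1 := S ⟨Term.uri d, URI.sp, Term.uri e⟩ (by simp)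
    have h2 := S ⟨x, d, y⟩ (by simp)
    obtain ⟨-, hpe, hsub⟩ := M.sp_sub _ _ h1.2
    exact ⟨hpe, hsub h2.2⟩
  | sc_trans a b c =>
    have h1 := S ⟨a, URI.sc, b⟩ (by simp)
    have h2 := S ⟨b, URI.sc, c⟩ (by simp)
    obtain ⟨hca, hcb, -⟩ := M.sc_sub _ _ h1.2
    obtain ⟨-, hcc, -⟩ := M.sc_sub _ _ h2.2
    exact ⟨h1.1, M.sc_trans _ _ _ hca hcb hcc h1.2 h2.2⟩
  | sc_mono a b x =>
    have h1 := S ⟨a, URI.sc, b⟩ (by simp)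
    have h2 := S ⟨x, URI.typ, a⟩ (by simp)
    obtain ⟨hca, hcb, hsub⟩ := M.sc_sub _ _ h1.2
    have hx : I.int x ∈ I.extC (I.int a) := (M.typI1 _ _ hca).2 h2.2
    exact ⟨htyp, (M.typI1 _ _ hcb).1 (hsub hx)⟩
  | dom d b x y =>
    have h1 := S ⟨Term.uri d, URI.dom, b⟩ (by simp)
    have h2 := S ⟨x, d, y⟩ (by simp)
    have hx := M.typI2 _ _ _ _ h1.2 h2.2
    exact ⟨htyp, (M.typI1 _ _ (M.typII2 _ _ h1.2).2).1 hx⟩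
  | rng d b x y =>
    have h1 := S ⟨Term.uri d, URI.rng, b⟩ (by simp)
    have h2 := S ⟨x, d, y⟩ (by simp)
    have hx := M.typI3 _ _ _ _ h1.2 h2.2
    exact ⟨htyp, (M.typI1 _ _ (M.typII3 _ _ h1.2).2).1 hx⟩
  | idom a b x y d =>
    have h1 := S ⟨a, URI.dom, b⟩ (by simp)
    have h2 := S ⟨Term.uri d, URI.sp, a⟩ (by simp)
    have h3 := S ⟨x, d, y⟩ (by simp)
    obtain ⟨-, -, hsub⟩ := M.sp_sub _ _ h2.2
    have hx := M.typI2 _ _ _ _ h1.2 (hsub h3.2)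
    exact ⟨htyp, (M.typI1 _ _ (M.typII2 _ _ h1.2).2).1 hx⟩
  | irng a b x y d =>
    have h1 := S ⟨a, URI.rng, b⟩ (by simp)
    have h2 := S ⟨Term.uri d, URI.sp, a⟩ (by simp)
    have h3 := S ⟨x, d, y⟩ (by simp)
    obtain ⟨-, -, hsub⟩ := M.sp_sub _ _ h2.2
    have hx := M.typI3 _ _ _ _ h1.2 (hsub h3.2)
    exact ⟨htyp, (M.typI1 _ _ (M.typII3 _ _ h1.2).2).1 hx⟩

lemma models_stepNM {I : Interp} {G K : Graph} (M : Models I G)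
    (h : StepNM RuleInst Triple.okRdf G K) : Models I K := by
  cases h with
  | sub h => exact models_anti h M
  | rule R τ hR hr _ =>
    have hterms := ruleInst_terms hr
    have hmono : rhoVocT ∪ uni R ⊆ rhoVocT ∪ uni G :=
      Set.union_subset_union_right _ (uni_mono hR)
    have hV : rhoVocT ∪ uni (insert τ G) ⊆ rhoVocT ∪ uni G := by
      rintro t (ht | ⟨σ, hσ, htσ⟩)
      · exact Or.inl ht
      · rcases Finset.mem_insert.1 hσ with rfl | hσ
        · rcases htσ with rfl | rfl | rfl
          · exact hmono hterms.1
          · exact hmono hterms.2.1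
          · exact hmono hterms.2.2
        · exact Or.inr ⟨σ, hσ, htσ⟩
    refine { M with interp := isInterp_anti hV M.interp, simple := ?_ }
    intro σ hσ
    rcases Finset.mem_insert.1 hσ with rfl | hσ
    · exact models_rule M hR hr
    · exact M.simple σ hσ

lemma models_derivNM {I : Interp} {G K : Graph} (M : Models I G)
    (h : DerivNM RuleInst Triple.okRdf G K) : Models I K := by
  induction h with
  | refl => exact M
  | tail _ hstep ih => exact models_stepNM ih hstep

lemma stepNM_union {rules : Finset Triple → Triple → Prop} {ok : Triple → Prop}
    {G H : Graph} (K : Graph) (h : StepNM rules ok G H) : StepNM rules ok (G ∪ K) (H ∪ K) := by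
  cases h with
  | sub h => exact .sub (Finset.union_subset_union h (Finset.Subset.refl K))
  | rule R τ hR hr hok =>
    rw [Finset.insert_union]
    exact .rule R τ (hR.trans Finset.subset_union_left) hr hok

lemma derivNM_union {rules : Finset Triple → Triple → Prop} {ok : Triple → Prop}
    {G H : Graph} (K : Graph) (h : DerivNM rules ok G H) :
    DerivNM rules ok (G ∪ K) (H ∪ K) := by
  induction h with
  | refl => exact Relation.ReflTransGen.refl
  | tail _ hstep ih => exact ih.tail (stepNM_union K hstep)

lemma derivNM_sup {rules : Finset Triple → Triple → Prop} {ok : Triple → Prop}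
    {G H K : Graph} (h1 : DerivNM rules ok G H) (h2 : DerivNM rules ok G K) :
    DerivNM rules ok G (H ∪ K) := by
  have a1 : DerivNM rules ok G (H ∪ G) := by
    have := derivNM_union G h1; rwa [Finset.union_self] at this
  have a2 : DerivNM rules ok (H ∪ G) (K ∪ (H ∪ G)) := by
    have := derivNM_union (H ∪ G) h2
    rwa [show G ∪ (H ∪ G) = H ∪ G from by ext x; simp; tauto] at this
  exact (a1.trans a2).trans
    (Relation.ReflTransGen.single (.sub (by intro x hx; simp at hx ⊢; tauto)))

lemma exists_deriv {rules : Finset Triple → Triple → Prop} {ok : Triple → Prop}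
    {G : Graph} (R : Finset Triple) (h : ↑R ⊆ Closure rules ok G) :
    ∃ K, DerivNM rules ok G K ∧ R ⊆ K := by
  classical
  induction R using Finset.induction_on with
  | empty => exact ⟨G, Relation.ReflTransGen.refl, by simp⟩
  | insert _ _ hτ ih =>
    rename_i τ R
    obtain ⟨K, hK, hRK⟩ := ih (fun x hx => h (by simp at hx ⊢; tauto))
    obtain ⟨K', hK', hτK'⟩ := h (show τ ∈ ↑(insert τ R) by simp)
    refine ⟨K ∪ K', derivNM_sup hK hK', ?_⟩
    intro x hx
    rcases Finset.mem_insert.1 hx with rfl | hx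
    · exact Finset.mem_union_right _ hτK'
    · exact Finset.mem_union_left _ (hRK hx)

lemma closure_closedUnder {rules : Finset Triple → Triple → Prop} {ok : Triple → Prop}
    {G : Graph} : ClosedUnder rules ok (Closure rules ok G) := by
  intro R τ hr hok hR
  obtain ⟨K, hK, hRK⟩ := exists_deriv R hR
  exact ⟨insert τ K, hK.tail (.rule R τ hRK hr hok), Finset.mem_insert_self _ _⟩

lemma subset_closure {rules : Finset Triple → Triple → Prop} {ok : Triple → Prop}
    {G : Graph} {τ : Triple} (h : τ ∈ G) : τ ∈ Closure rules ok G :=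
  ⟨G, Relation.ReflTransGen.refl, h⟩

lemma closure_subset {rules : Finset Triple → Triple → Prop} {ok : Triple → Prop}
    {G : Graph} {S : Set Triple} (hG : ∀ τ ∈ G, τ ∈ S)
    (hS : ClosedUnder rules ok S) : Closure rules ok G ⊆ S := by
  rintro τ ⟨K, hK, hτ⟩
  have key : ∀ σ ∈ K, σ ∈ S := by
    clear hτ
    induction hK with
    | refl => exact hG
    | tail _ hstep ih =>
      cases hstep with
      | sub h => exact fun σ hσ => ih σ (h hσ)
      | rule R τ' hR hr hok =>
        intro σ hσ
        rcases Finset.mem_insert.1 hσ with rfl | hσ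
        · exact hS R σ hr hok (fun x hx => ih x (hR hx))
        · exact ih σ hσ
  exact key τ hτ

lemma cl_ok {G : Graph} (hG : IsRdfGraph G) : ∀ τ ∈ Cl G, τ.okRdf :=
  fun _ hτ => closure_subset (S := {τ | τ.okRdf}) hG (fun _ _ _ hok _ => hok) hτ

lemma cl_rule {G : Graph} {R : Finset Triple} {τ : Triple} (hr : RuleInst R τ)
    (hok : τ.okRdf) (hR : ∀ σ ∈ R, σ ∈ Cl G) : τ ∈ Cl G :=
  closure_closedUnder R τ hr hok (fun σ hσ => hR σ (Finset.mem_coe.1 hσ))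

lemma cl_terms {G : Graph} : ∀ τ ∈ Cl G,
    τ.s ∈ rhoVocT ∪ uni G ∧ Term.uri τ.p ∈ rhoVocT ∪ uni G ∧ τ.o ∈ rhoVocT ∪ uni G := by
  intro τ hτ
  refine closure_subset (S := {σ : Triple |
    σ.s ∈ rhoVocT ∪ uni G ∧ Term.uri σ.p ∈ rhoVocT ∪ uni G ∧ σ.o ∈ rhoVocT ∪ uni G})
    ?_ ?_ hτ
  · intro σ hσ
    exact ⟨Or.inr (mem_uni_s hσ), Or.inr (mem_uni_p hσ), Or.inr (mem_uni_o hσ)⟩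
  · intro R σ hr _ hR
    have hterms := ruleInst_terms hr
    have hU : rhoVocT ∪ uni R ⊆ rhoVocT ∪ uni G := by
      rintro t (ht | ⟨ρ, hρ, htρ⟩)
      · exact Or.inl ht
      · have hmem := hR (Finset.mem_coe.2 hρ)
        rcases htρ with rfl | rfl | rfl
        · exact hmem.1
        · exact hmem.2.1
        · exact hmem.2.2
    exact ⟨hU hterms.1, hU hterms.2.1, hU hterms.2.2⟩

/-! ### The canonical ρdf model built from the closure -/

def uniF (G : Graph) : Finset Term := G.biUnion fun τ => {τ.s, Term.uri τ.p, τ.o}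

lemma mem_uniF {t : Term} {G : Graph} : t ∈ uniF G ↔ t ∈ uni G := by
  simp [uniF, uni]

def canInt (G : Graph) : Term → Term
  | Term.blank n => if Term.blank n ∈ uniF G then Term.blank n else Term.lit 0
  | t => t

def canExt (G : Graph) (p : Term) : Set (Term × Term) :=
  {xy | ∃ u : URI, (⟨xy.1, u, xy.2⟩ : Triple) ∈ Cl G ∧
    (p = Term.uri u ∨ (⟨Term.uri u, URI.sp, p⟩ : Triple) ∈ Cl G)}

def canI (G : Graph) : Interp where
  ΔR := insert (Term.lit 0) (rhoVocT ∪ uni G)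
  ΔP := rhoVocT ∪ {t | (∃ u : URI, ∃ x y, t = Term.uri u ∧ (⟨x, u, y⟩ : Triple) ∈ Cl G) ∨
        ∃ q, (⟨t, URI.sp, q⟩ : Triple) ∈ Cl G ∨ (⟨q, URI.sp, t⟩ : Triple) ∈ Cl G ∨
             (⟨t, URI.dom, q⟩ : Triple) ∈ Cl G ∨ (⟨t, URI.rng, q⟩ : Triple) ∈ Cl G}
  ΔC := insert (Term.lit 0) {t | (∃ x, (⟨x, URI.typ, t⟩ : Triple) ∈ Cl G) ∨
        ∃ q, (⟨t, URI.sc, q⟩ : Triple) ∈ Cl G ∨ (⟨q, URI.sc, t⟩ : Triple) ∈ Cl G ∨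
             (⟨q, URI.dom, t⟩ : Triple) ∈ Cl G ∨ (⟨q, URI.rng, t⟩ : Triple) ∈ Cl G}
  ΔL := insert (Term.lit 0) {t | t ∈ uni G ∧ t.isLit}
  extP := canExt G
  extC := fun c => {x | (⟨x, URI.typ, c⟩ : Triple) ∈ Cl G}
  int := canInt G

lemma canInt_not_blank {G : Graph} {t : Term} (h : ¬ t.isBlank) : canInt G t = t := by
  cases t with
  | blank n => exact absurd trivial h
  | uri u => rfl
  | lit n => rfl

lemma canInt_of_mem {G : Graph} {t : Term} (h : t ∈ uni G) : canInt G t = t := by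
  cases t with
  | blank n => simp [canInt, mem_uniF.2 h]
  | uri u => rfl
  | lit n => rfl

lemma canExt_pairs {G : Graph} (hG : IsRdfGraph G) {v : URI} (hv : v ∈ rhoVoc) (x y : Term) :
    (x, y) ∈ canExt G (Term.uri v) ↔ (⟨x, v, y⟩ : Triple) ∈ Cl G := by
  constructor
  · rintro ⟨u, hu, heq | hsp⟩
    · injection heq with h
      subst h; exact hu
    · exact absurd hv ((cl_ok hG _ hsp).2)
  · intro h; exact ⟨v, h, Or.inl rfl⟩

lemma rhoVoc_finite : rhoVoc.Finite := by
  unfold rhoVoc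
  exact ((((Set.finite_singleton URI.rng).insert URI.dom).insert URI.typ).insert
    URI.sc).insert URI.sp

lemma uni_finite (G : Graph) : (uni G).Finite := by
  have : uni G = ↑(uniF G) := by ext t; exact (mem_uniF).symm
  rw [this]; exact (uniF G).finite_toSet

lemma canR_finite (G : Graph) : (insert (Term.lit 0) (rhoVocT ∪ uni G) : Set Term).Finite :=
  (((rhoVoc_finite.image Term.uri).union (uni_finite G))).insert _

lemma canI_models {G : Graph} (hG : IsRdfGraph G) : Models (canI G) G := by
  have hok := cl_ok hG
  have hsp : URI.sp ∈ rhoVoc := by simp [rhoVoc]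
  have hsc : URI.sc ∈ rhoVoc := by simp [rhoVoc]
  have htyp : URI.typ ∈ rhoVoc := by simp [rhoVoc]
  have hdom : URI.dom ∈ rhoVoc := by simp [rhoVoc]
  have hrng : URI.rng ∈ rhoVoc := by simp [rhoVoc]
  have hPsub : (canI G).ΔP ⊆ (canI G).ΔR := by
    rintro t (ht | ht)
    · exact Or.inr (Or.inl ht)
    · rcases ht with ⟨u, x, y, rfl, h⟩ | ⟨q, h | h | h | h⟩
      · exact Or.inr (cl_terms _ h).2.1
      · exact Or.inr (cl_terms _ h).1
      · exact Or.inr (cl_terms _ h).2.2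
      · exact Or.inr (cl_terms _ h).1
      · exact Or.inr (cl_terms _ h).1
  have hCsub : (canI G).ΔC ⊆ (canI G).ΔR := by
    rintro t (rfl | ht)
    · exact Or.inl rfl
    · rcases ht with ⟨x, h⟩ | ⟨q, h | h | h | h⟩
      · exact Or.inr (cl_terms _ h).2.2
      · exact Or.inr (cl_terms _ h).1
      · exact Or.inr (cl_terms _ h).2.2
      · exact Or.inr (cl_terms _ h).2.2
      · exact Or.inr (cl_terms _ h).2.2
  refine
    { interp := ?_
      simple := ?_
      sp_trans := ?_
      sp_sub := ?_
      sc_trans := ?_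
      sc_sub := ?_
      typI1 := ?_
      typI2 := ?_
      typI3 := ?_
      typII1 := fun e he => Or.inl ⟨e, he, rfl⟩
      typII2 := ?_
      typII3 := ?_
      typII4 := ?_ }
  · refine
      { finR := canR_finite G
        neR := ⟨Term.lit 0, Set.mem_insert _ _⟩
        finP := (canR_finite G).subset hPsub
        neP := ⟨Term.uri URI.sp, Or.inl ⟨URI.sp, hsp, rfl⟩⟩
        finC := (canR_finite G).subset hCsub
        neC := ⟨Term.lit 0, Set.mem_insert _ _⟩
        finL := (canR_finite G).subset ?_
        neL := ⟨Term.lit 0, Set.mem_insert _ _⟩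
        hCR := hCsub
        hLR := ?_
        hlit := ?_
        hextP := ?_
        hextC := ?_
        hint := ?_
        hintlit := fun n => rfl
        hintblank := ?_ }
    · rintro t (rfl | ⟨h, -⟩)
      · exact Or.inl rfl
      · exact Or.inr (Or.inr h)
    · rintro t (rfl | ⟨h, -⟩)
      · exact Or.inl rfl
      · exact Or.inr (Or.inr h)
    · rintro n (⟨u, -, heq⟩ | h)
      · exact absurd heq (by simp)
      · exact Or.inr ⟨h, trivial⟩
    · rintro p - ⟨x, y⟩ ⟨u, hu, -⟩
      exact ⟨Or.inr (cl_terms _ hu).1, Or.inr (cl_terms _ hu).2.2⟩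
    · rintro c - x hx
      exact Or.inr (cl_terms _ hx).1
    · intro t ht hb
      left
      show canInt G t ∈ _
      rw [canInt_not_blank hb]
      exact Or.inr ht
    · intro n
      show (if Term.blank n ∈ uniF G then Term.blank n else Term.lit 0) ∈ _
      split
      · exact Or.inr (Or.inr (mem_uniF.1 ‹_›))
      · exact Or.inl rfl
  · -- simple
    intro τ hτ
    have hcl : τ ∈ Cl G := subset_closure hτ
    constructor
    · exact Or.inr (Or.inl ⟨τ.p, τ.s, τ.o, rfl, hcl⟩)
    · show ((canInt G τ.s, canInt G τ.o)) ∈ canExt G (Term.uri τ.p)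
      rw [canInt_of_mem (mem_uni_s hτ), canInt_of_mem (mem_uni_o hτ)]
      exact ⟨τ.p, hcl, Or.inl rfl⟩
  · -- sp_trans
    intro p q r _ _ _ h1 h2
    have h1' := (canExt_pairs hG hsp p q).1 h1
    have h2' := (canExt_pairs hG hsp q r).1 h2
    refine (canExt_pairs hG hsp p r).2 (cl_rule (RuleInst.sp_trans p q r)
      ⟨(hok _ h1').1, (hok _ h2').2⟩ ?_)
    intro σ hσ
    rcases Finset.mem_insert.1 hσ with rfl | hσ
    · exact h1'
    · rw [Finset.mem_singleton.1 hσ]; exact h2'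
  · -- sp_sub
    intro p q h
    have h' := (canExt_pairs hG hsp p q).1 h
    refine ⟨Or.inr (Or.inr ⟨q, Or.inl h'⟩), Or.inr (Or.inr ⟨p, Or.inr (Or.inl h')⟩), ?_⟩
    rintro ⟨x, y⟩ ⟨u, hu, heq | hu2⟩
    · subst heq
      exact ⟨u, hu, Or.inr h'⟩
    · refine ⟨u, hu, Or.inr (cl_rule (RuleInst.sp_trans (Term.uri u) p q)
        ⟨(hok _ hu2).1, (hok _ h').2⟩ ?_)⟩
      intro σ hσ
      rcases Finset.mem_insert.1 hσ with rfl | hσ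
      · exact hu2
      · rw [Finset.mem_singleton.1 hσ]; exact h'
  · -- sc_trans
    intro c d e _ _ _ h1 h2
    have h1' := (canExt_pairs hG hsc c d).1 h1
    have h2' := (canExt_pairs hG hsc d e).1 h2
    refine (canExt_pairs hG hsc c e).2 (cl_rule (RuleInst.sc_trans c d e)
      ⟨(hok _ h1').1, (hok _ h2').2⟩ ?_)
    intro σ hσ
    rcases Finset.mem_insert.1 hσ with rfl | hσ
    · exact h1'
    · rw [Finset.mem_singleton.1 hσ]; exact h2'
  · -- sc_sub
    intro c d h
    have h' := (canExt_pairs hG hsc c d).1 h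
    refine ⟨Or.inr (Or.inr ⟨d, Or.inl h'⟩), Or.inr (Or.inr ⟨c, Or.inr (Or.inl h')⟩), ?_⟩
    intro x hx
    refine cl_rule (RuleInst.sc_mono c d x) ⟨(hok _ hx).1, (hok _ h').2⟩ ?_
    intro σ hσ
    rcases Finset.mem_insert.1 hσ with rfl | hσ
    · exact h'
    · rw [Finset.mem_singleton.1 hσ]; exact hx
  · -- typI1
    intro x c _
    exact (canExt_pairs hG htyp x c).symm
  · -- typI2
    intro p c x y h1 h2
    have h1' := (canExt_pairs hG hdom p c).1 h1
    obtain ⟨u, hu, heq | hu2⟩ := h2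
    · subst heq
      refine cl_rule (RuleInst.dom u c x y) ⟨(hok _ hu).1, (hok _ h1').2⟩ ?_
      intro σ hσ
      rcases Finset.mem_insert.1 hσ with rfl | hσ
      · exact h1'
      · rw [Finset.mem_singleton.1 hσ]; exact hu
    · refine cl_rule (RuleInst.idom p c x y u) ⟨(hok _ hu).1, (hok _ h1').2⟩ ?_
      intro σ hσ
      rcases Finset.mem_insert.1 hσ with rfl | hσ
      · exact h1'
      · rcases Finset.mem_insert.1 hσ with rfl | hσ
        · exact hu2
        · rw [Finset.mem_singleton.1 hσ]; exact hu
  · -- typI3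
    intro p c x y h1 h2
    have h1' := (canExt_pairs hG hrng p c).1 h1
    obtain ⟨u, hu, heq | hu2⟩ := h2
    · subst heq
      refine cl_rule (RuleInst.rng u c x y) ⟨(hok _ hu).2, (hok _ h1').2⟩ ?_
      intro σ hσ
      rcases Finset.mem_insert.1 hσ with rfl | hσ
      · exact h1'
      · rw [Finset.mem_singleton.1 hσ]; exact hu
    · refine cl_rule (RuleInst.irng p c x y u) ⟨(hok _ hu).2, (hok _ h1').2⟩ ?_
      intro σ hσ
      rcases Finset.mem_insert.1 hσ with rfl | hσ
      · exact h1'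
      · rcases Finset.mem_insert.1 hσ with rfl | hσ
        · exact hu2
        · rw [Finset.mem_singleton.1 hσ]; exact hu
  · -- typII2
    intro p c h
    have h' := (canExt_pairs hG hdom p c).1 h
    exact ⟨Or.inr (Or.inr ⟨c, Or.inr (Or.inr (Or.inl h'))⟩),
      Or.inr (Or.inr ⟨p, Or.inr (Or.inr (Or.inl h'))⟩)⟩
  · -- typII3
    intro p c h
    have h' := (canExt_pairs hG hrng p c).1 h
    exact ⟨Or.inr (Or.inr ⟨c, Or.inr (Or.inr (Or.inr h'))⟩),
      Or.inr (Or.inr ⟨p, Or.inr (Or.inr (Or.inr h'))⟩)⟩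
  · -- typII4
    intro x c h
    have h' := (canExt_pairs hG htyp x c).1 h
    exact Or.inr (Or.inl ⟨x, h'⟩)

/-- For ground `H`: `G ⊨ H` iff `H ⊆ Cl(G)`. -/
theorem rdf_entails_iff_subset_closure (G H : Graph) (hG : IsRdfGraph G)
    (hH : IsRdfGraph H) (hg : Ground H) :
    Entails G H ↔ ↑H ⊆ Cl G := by
  constructor
  · intro hent τ hτ'
    have hτ : τ ∈ H := Finset.mem_coe.1 hτ'
    have MH := hent _ (canI_models hG)
    obtain ⟨-, hp⟩ := MH.simple τ hτ
    have hp' : (canInt G τ.s, canInt G τ.o) ∈ canExt G (Term.uri τ.p) := hp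
    rw [canInt_not_blank (hg τ hτ).1, canInt_not_blank (hg τ hτ).2] at hp'
    obtain ⟨u, hu, heq | hsp⟩ := hp'
    · injection heq with h
      rw [← h] at hu
      exact hu
    · refine cl_rule (RuleInst.sp_mono u τ.p τ.s τ.o) (hH τ hτ) ?_
      intro σ hσ
      rcases Finset.mem_insert.1 hσ with rfl | hσ
      · exact hsp
      · rw [Finset.mem_singleton.1 hσ]; exact hu
  · intro hsub I M
    obtain ⟨K, hK, hHK⟩ := exists_deriv H hsub
    exact models_anti hHK (models_derivNM M hK)

end Rho
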